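/- Let Q ∈ ℝ^{k×k} have i.i.d. standard Gaussian entries and let σ₁ ≤ ⋯ ≤ σ_k be its singular values. Assuming the bound Pr[σ_j ≤ αj/√k] ≤ ((2e)^{1/2} α)^{j²} for all j ∈ [k] and α ≥ 0, then for every p ∈ (0,1): Pr[ Tr((QᵀQ)^{-1}) ≥ π²ek/(3p) ] ≤ √p/(1-p). -/

import Mathlib

open MeasureTheory ProbabilityTheory Matrix

lemma trace_inv_hermitian' {n : Type*} [Fintype n] [DecidableEq n] {A : Matrix n n ℝ}
    (hA : A.IsHermitian) (hv : ∀ i, hA.eigenvalues i ≠ 0) :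
    A⁻¹.trace = ∑ i, (hA.eigenvalues i)⁻¹ := by
  have hU := hA.eigenvectorUnitary.2
  rw [Matrix.mem_unitaryGroup_iff'] at hU
  have hU2 : (hA.eigenvectorUnitary : Matrix n n ℝ) * star (hA.eigenvectorUnitary : Matrix n n ℝ) = 1 := by
    rw [mul_eq_one_comm] at hU; exact hU
  have hD : (diagonal (RCLike.ofReal ∘ hA.eigenvalues) : Matrix n n ℝ)⁻¹
      = diagonal (fun i => (hA.eigenvalues i)⁻¹) := by
    apply Matrix.inv_eq_right_inv
    rw [diagonal_mul_diagonal]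
    have : ∀ i, (RCLike.ofReal ∘ hA.eigenvalues) i * (hA.eigenvalues i)⁻¹ = (1 : ℝ) := by
      intro i; simp [mul_inv_cancel₀ (hv i)]
    simp only [Function.comp] at this ⊢
    rw [show (fun i => (RCLike.ofReal (hA.eigenvalues i) : ℝ) * (hA.eigenvalues i)⁻¹) = fun _ => (1:ℝ) from funext this, diagonal_one]
  conv_lhs => rw [hA.spectral_theorem]
  rw [Unitary.conjStarAlgAut_apply, Matrix.mul_inv_rev, Matrix.mul_inv_rev,
    Matrix.inv_eq_left_inv hU2, Matrix.inv_eq_left_inv hU, hD,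
    ← mul_assoc, Matrix.trace_mul_cycle, hU, one_mul, Matrix.trace_diagonal]

lemma basel_partial (k : ℕ) :
    ∑ j : Fin k, (1 : ℝ) / ((j : ℕ) + 1) ^ 2 ≤ Real.pi ^ 2 / 6 := by
  have h := hasSum_zeta_two
  have h1 : ∑ j : Fin k, (1 : ℝ) / ((j : ℕ) + 1) ^ 2
      = ∑ n ∈ Finset.range k, (1 : ℝ) / ((n : ℝ) + 1) ^ 2 :=
    Fin.sum_univ_eq_sum_range (fun m => (1:ℝ) / ((m : ℝ) + 1) ^ 2) k
  have h2 : ∑ n ∈ Finset.range k, (1 : ℝ) / ((n : ℝ) + 1) ^ 2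
      = ∑ n ∈ Finset.range (k + 1), (1 : ℝ) / (n : ℝ) ^ 2 := by
    rw [Finset.sum_range_succ']
    push_cast
    simp
  rw [h1, h2, ← h.tsum_eq]
  exact Summable.sum_le_tsum _ (fun i _ => by positivity) h.summable

/-- Let `Q ∈ ℝ^{k×k}` have i.i.d. standard Gaussian entries with singular
values `σ₁ ≤ ⋯ ≤ σ_k` (here `σ ω` enumerates the singular values of the
sample `ω` in increasing order, i.e. the square roots of the eigenvalues of
`QᵀQ` up to a permutation).  Assuming the bound
`Pr[σ_j ≤ αj/√k] ≤ ((2e)^{1/2} α)^{j²}` for all `j` and `α ≥ 0`, then for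
every `p ∈ (0,1)`:
`Pr[Tr((QᵀQ)⁻¹) ≥ π²ek/(3p)] ≤ √p/(1-p)`. -/
theorem trace_inv_gram_tail {k : ℕ} (hk : 1 ≤ k)
    (σ : ((Fin k × Fin k) → ℝ) → Fin k → ℝ)
    (hσ_nonneg : ∀ ω j, 0 ≤ σ ω j)
    (hσ_mono : ∀ ω, Monotone (σ ω))
    (hσ_eig : ∀ ω : (Fin k × Fin k) → ℝ, ∃ e : Fin k ≃ Fin k, ∀ j,
      (σ ω j) ^ 2 =
        (show Matrix.IsHermitian ((Matrix.of fun i j' => ω (i, j') : Matrix (Fin k) (Fin k) ℝ)ᵀ *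
          (Matrix.of fun i j' => ω (i, j') : Matrix (Fin k) (Fin k) ℝ)) from
          Matrix.isHermitian_conjTranspose_mul_self
          (Matrix.of fun i j' => ω (i, j') : Matrix (Fin k) (Fin k) ℝ)).eigenvalues (e j))
    (hbound : ∀ (j : Fin k) (α : ℝ), 0 ≤ α →
      (Measure.pi fun _ : Fin k × Fin k => gaussianReal 0 1)
          {ω | σ ω j ≤ α * ((j : ℕ) + 1) / Real.sqrt k}
        ≤ ENNReal.ofReal ((Real.sqrt (2 * Real.exp 1) * α) ^ (((j : ℕ) + 1) ^ 2)))
    (p : ℝ) (hp0 : 0 < p) (hp1 : p < 1) :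
    (Measure.pi fun _ : Fin k × Fin k => gaussianReal 0 1)
        {ω | Real.pi ^ 2 * Real.exp 1 * k / (3 * p) ≤
          Matrix.trace
            (((Matrix.of fun i j' => ω (i, j') : Matrix (Fin k) (Fin k) ℝ)ᵀ *
              (Matrix.of fun i j' => ω (i, j')))⁻¹)}
      ≤ ENNReal.ofReal (Real.sqrt p / (1 - p)) := by
  haveI : NeZero k := ⟨by omega⟩
  set μ := Measure.pi fun _ : Fin k × Fin k => gaussianReal 0 1 with hμ
  have hexp : (0:ℝ) < Real.exp 1 := Real.exp_pos 1
  set α : ℝ := Real.sqrt (p / (2 * Real.exp 1)) with hαdef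
  have hα : 0 < α := Real.sqrt_pos.mpr (by positivity)
  have hα2 : α ^ 2 = p / (2 * Real.exp 1) := Real.sq_sqrt (by positivity)
  have hkpos : (0:ℝ) < (k:ℝ) := by exact_mod_cast hk
  have hskpos : 0 < Real.sqrt k := Real.sqrt_pos.mpr hkpos
  set B : Fin k → Set ((Fin k × Fin k) → ℝ) :=
    fun j => {ω | σ ω j ≤ α * ((j : ℕ) + 1) / Real.sqrt k} with hB
  -- inclusion
  have hsub : {ω : (Fin k × Fin k) → ℝ | Real.pi ^ 2 * Real.exp 1 * k / (3 * p) ≤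
      Matrix.trace
        (((Matrix.of fun i j' => ω (i, j') : Matrix (Fin k) (Fin k) ℝ)ᵀ *
          (Matrix.of fun i j' => ω (i, j')))⁻¹)} ⊆ ⋃ j, B j := by
    intro ω hω
    simp only [Set.mem_setOf_eq] at hω
    by_contra hcon
    simp only [Set.mem_iUnion, hB, Set.mem_setOf_eq, not_exists, not_le] at hcon
    obtain ⟨e, he⟩ := hσ_eig ω
    set hA : Matrix.IsHermitian ((Matrix.of fun i j' => ω (i, j') : Matrix (Fin k) (Fin k) ℝ)ᵀ *
          (Matrix.of fun i j' => ω (i, j') : Matrix (Fin k) (Fin k) ℝ)) := Matrix.isHermitian_conjTranspose_mul_self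
      (Matrix.of fun i j' => ω (i, j') : Matrix (Fin k) (Fin k) ℝ) with hAdef
    have hσpos : ∀ j, 0 < σ ω j := fun j =>
      lt_trans (by positivity) (hcon j)
    have hv : ∀ i, hA.eigenvalues i ≠ 0 := by
      intro i
      obtain ⟨j, rfl⟩ := e.surjective i
      rw [← he j]
      exact pow_ne_zero _ (hσpos j).ne'
    have htr : Matrix.trace
        (((Matrix.of fun i j' => ω (i, j') : Matrix (Fin k) (Fin k) ℝ)ᵀ *
          (Matrix.of fun i j' => ω (i, j')))⁻¹) = ∑ j, ((σ ω j) ^ 2)⁻¹ := by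
      rw [show ((Matrix.of fun i j' => ω (i, j') : Matrix (Fin k) (Fin k) ℝ)ᵀ)
          = ((Matrix.of fun i j' => ω (i, j') : Matrix (Fin k) (Fin k) ℝ)ᴴ) from
          (Matrix.conjTranspose_eq_transpose_of_trivial _).symm]
      erw [trace_inv_hermitian' hA hv, ← Equiv.sum_comp e]
      exact Finset.sum_congr rfl fun j _ => by rw [← he j]
    have hterm : ∀ j : Fin k, ((σ ω j) ^ 2)⁻¹
        < 2 * Real.exp 1 * k / (p * ((j : ℕ) + 1) ^ 2) := by
      intro j
      have hb : (0:ℝ) < α * ((j : ℕ) + 1) / Real.sqrt k := by positivity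
      have hsq : (α * ((j : ℕ) + 1) / Real.sqrt k) ^ 2 < (σ ω j) ^ 2 := by
        apply pow_lt_pow_left₀ (hcon j) hb.le (by norm_num)
      have h2 : ((σ ω j) ^ 2)⁻¹ < ((α * ((j : ℕ) + 1) / Real.sqrt k) ^ 2)⁻¹ :=
        inv_strictAnti₀ (by positivity) hsq
      have h3 : (α * ((j : ℕ) + 1) / Real.sqrt k) ^ 2
          = p * ((j : ℕ) + 1) ^ 2 / (2 * Real.exp 1 * k) := by
        rw [div_pow, mul_pow, hα2, Real.sq_sqrt hkpos.le]
        ring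
      rw [h3, inv_div] at h2
      have h4 : 2 * Real.exp 1 * (k:ℝ) / (p * (((j : ℕ) : ℝ) + 1) ^ 2)
          = 2 * Real.exp 1 * k / (p * ((j : ℕ) + 1) ^ 2) := rfl
      calc ((σ ω j) ^ 2)⁻¹ < 2 * Real.exp 1 * k / (p * (((j:ℕ):ℝ) + 1) ^ 2) := h2
        _ = _ := h4
    have hlt : ∑ j, ((σ ω j) ^ 2)⁻¹ < Real.pi ^ 2 * Real.exp 1 * k / (3 * p) := by
      calc ∑ j, ((σ ω j) ^ 2)⁻¹
          < ∑ j : Fin k, 2 * Real.exp 1 * k / (p * ((j : ℕ) + 1) ^ 2) :=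
            Finset.sum_lt_sum_of_nonempty Finset.univ_nonempty fun j _ => hterm j
        _ = (2 * Real.exp 1 * k / p) * ∑ j : Fin k, (1:ℝ) / ((j : ℕ) + 1) ^ 2 := by
            rw [Finset.mul_sum]
            exact Finset.sum_congr rfl fun j _ => by
              rw [div_mul_div_comm, mul_one]
        _ ≤ (2 * Real.exp 1 * k / p) * (Real.pi ^ 2 / 6) :=
            mul_le_mul_of_nonneg_left (basel_partial k) (by positivity)
        _ = Real.pi ^ 2 * Real.exp 1 * k / (3 * p) := by
            field_simp
            ring
    rw [htr] at hω
    linarith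
  -- union bound
  have hsle1 : Real.sqrt p ≤ 1 := by
    rw [show (1:ℝ) = Real.sqrt 1 by simp]
    exact Real.sqrt_le_sqrt hp1.le
  have hsqeq : Real.sqrt (2 * Real.exp 1) * α = Real.sqrt p := by
    rw [hαdef, ← Real.sqrt_mul (by positivity)]
    congr 1
    field_simp
  have htermb : ∀ j : Fin k,
      (Real.sqrt (2 * Real.exp 1) * α) ^ (((j : ℕ) + 1) ^ 2)
        ≤ Real.sqrt p * p ^ (j : ℕ) := by
    intro j
    rw [hsqeq]
    calc Real.sqrt p ^ (((j : ℕ) + 1) ^ 2) ≤ Real.sqrt p ^ (2 * (j:ℕ) + 1) :=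
        pow_le_pow_of_le_one (Real.sqrt_nonneg p) hsle1 (by nlinarith [sq_nonneg ((j:ℕ):ℤ)]; )
      _ = Real.sqrt p * p ^ (j : ℕ) := by
        rw [pow_add, pow_mul, Real.sq_sqrt hp0.le, pow_one, mul_comm]
  have hgeom : ∑ j : Fin k, Real.sqrt p * p ^ (j : ℕ) ≤ Real.sqrt p / (1 - p) := by
    rw [← Finset.mul_sum, Fin.sum_univ_eq_sum_range, div_eq_mul_inv]
    apply mul_le_mul_of_nonneg_left _ (Real.sqrt_nonneg p)
    rw [← tsum_geometric_of_lt_one hp0.le hp1]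
    exact Summable.sum_le_tsum _ (fun i _ => by positivity) (summable_geometric_of_lt_one hp0.le hp1)
  calc μ _ ≤ μ (⋃ j, B j) := measure_mono hsub
    _ ≤ ∑' j, μ (B j) := measure_iUnion_le B
    _ = ∑ j, μ (B j) := tsum_fintype _
    _ ≤ ∑ j : Fin k, ENNReal.ofReal
          ((Real.sqrt (2 * Real.exp 1) * α) ^ (((j : ℕ) + 1) ^ 2)) :=
        Finset.sum_le_sum fun j _ => hbound j α hα.le
    _ ≤ ∑ j : Fin k, ENNReal.ofReal (Real.sqrt p * p ^ (j : ℕ)) :=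
        Finset.sum_le_sum fun j _ => ENNReal.ofReal_le_ofReal (htermb j)
    _ = ENNReal.ofReal (∑ j : Fin k, Real.sqrt p * p ^ (j : ℕ)) :=
        (ENNReal.ofReal_sum_of_nonneg fun j _ => by positivity).symm
    _ ≤ ENNReal.ofReal (Real.sqrt p / (1 - p)) := ENNReal.ofReal_le_ofReal hgeom
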